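/- Let φ(x,u,p) = −( p/u + 1/u + u ), the right-hand side of the equation u'' + u'/u + 1/u + u = 0. Then: (a) λ₂ = (p + 1)/u satisfies the λ-symmetry determining equation ∂_xλ + p·∂_uλ + φ·∂_pλ + λ² = ∂_uφ + λ·∂_pφ on the open set {(x,u,p) : u ≠ 0}; (b) λ₁ = −( 1/u + (u² + 1)/(p·u) ) satisfies the same determining equation on the open set {(x,u,p) : u ≠ 0, p ≠ 0}. Hence (∂_u, λ₁) and (∂_u, λ₂) are λ-symmetries of the equation. -/

import Mathlib

/- Coordinates on ℝ³ are (x,u,p) with indices 0,1,2; p plays the role of u'.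
For φ(x,u,p) defining u'' = φ(x,u,u'), a function λ(x,u,p) makes (∂_u, λ) a λ-symmetry
exactly when ∂_xλ + p∂_uλ + φ∂_pλ + λ² = ∂_uφ + λ∂_pφ (the determining equation). -/

set_option maxHeartbeats 1000000

noncomputable section

/-- Partial derivative in the `i`-th coordinate direction (0 = x, 1 = u, 2 = p). -/
def pd (i : Fin 3) (f : (Fin 3 → ℝ) → ℝ) (q : Fin 3 → ℝ) : ℝ :=
  fderiv ℝ f q (Pi.single i 1)

/-- for `φ = −(p/u + 1/u + u)` (the equation `u'' + u'/u + 1/u + u = 0`):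
(a) `λ₂ = (p + 1)/u` satisfies the determining equation on `{u ≠ 0}`;
(b) `λ₁ = −(1/u + (u² + 1)/(pu))` satisfies it on `{u ≠ 0, p ≠ 0}`.
Hence `(∂_u,λ₁)` and `(∂_u,λ₂)` are λ-symmetries of the equation. -/
theorem statement19 (φ lam₁ lam₂ : (Fin 3 → ℝ) → ℝ)
    (hφ : φ = fun q => -(q 2 / q 1 + 1 / q 1 + q 1))
    (hlam₂ : lam₂ = fun q => (q 2 + 1) / q 1)
    (hlam₁ : lam₁ = fun q => -(1 / q 1 + ((q 1) ^ 2 + 1) / (q 2 * q 1))) :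
    (∀ q : Fin 3 → ℝ, q 1 ≠ 0 →
      pd 0 lam₂ q + q 2 * pd 1 lam₂ q + φ q * pd 2 lam₂ q + (lam₂ q) ^ 2 =
        pd 1 φ q + lam₂ q * pd 2 φ q) ∧
    (∀ q : Fin 3 → ℝ, q 1 ≠ 0 → q 2 ≠ 0 →
      pd 0 lam₁ q + q 2 * pd 1 lam₁ q + φ q * pd 2 lam₁ q + (lam₁ q) ^ 2 =
        pd 1 φ q + lam₁ q * pd 2 φ q) := by
  subst hφ hlam₂ hlam₁
  have hproj : ∀ (q : Fin 3 → ℝ) (i : Fin 3), HasFDerivAt (fun q : Fin 3 → ℝ => q i)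
      (ContinuousLinearMap.proj i : (Fin 3 → ℝ) →L[ℝ] ℝ) q :=
    fun q i => (ContinuousLinearMap.proj i : (Fin 3 → ℝ) →L[ℝ] ℝ).hasFDerivAt
  constructor
  · intro q hu
    have inv_u := (hasDerivAt_inv hu).comp_hasFDerivAt q (hproj q 1)
    have H2 := ((hproj q 2).add_const 1).mul inv_u
    simp only [Function.comp_def, Pi.mul_def, ← div_eq_mul_inv] at H2
    have Hφ := (((((hproj q 2).mul inv_u).add inv_u).add (hproj q 1)).neg)
    simp only [Function.comp_def, Pi.mul_def, Pi.add_def, Pi.neg_def, ← div_eq_mul_inv] at Hφ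
    simp only [← one_div] at Hφ
    simp only [pd, H2.fderiv, Hφ.fderiv]
    simp [Pi.single_apply]
    field_simp
    ring
  · intro q hu hp
    have inv_u := (hasDerivAt_inv hu).comp_hasFDerivAt q (hproj q 1)
    have inv_pu := (hasDerivAt_inv (mul_ne_zero hp hu)).comp_hasFDerivAt q
      ((hproj q 2).mul (hproj q 1))
    have H1 := ((inv_u).add ((((hproj q 1).mul (hproj q 1)).add_const 1).mul inv_pu)).neg
    simp only [Function.comp_def, Pi.mul_def, Pi.add_def, Pi.neg_def, Pi.pow_def, ← div_eq_mul_inv] at H1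
    simp only [← one_div, ← pow_two] at H1
    have Hφ := (((((hproj q 2).mul inv_u).add inv_u).add (hproj q 1)).neg)
    simp only [Function.comp_def, Pi.mul_def, Pi.add_def, Pi.neg_def, ← div_eq_mul_inv] at Hφ
    simp only [← one_div] at Hφ
    simp only [pd, H1.fderiv, Hφ.fderiv]
    simp [Pi.single_apply]
    field_simp
    ring
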